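/- Let V be a finite-dimensional real normed vector space and S, T ⊆ V subsets. Define the asymptotic cone S∞ as the set of all limits lim_{n→∞} εₙ xₙ with xₙ ∈ S and εₙ > 0, εₙ → 0. If S∞ ∩ T∞ = {0}, then S ⋔ T in V, i.e., S ∩ (C + T + C) is bounded for every compact (equivalently, bounded) subset C ⊆ V. -/

import Mathlib

open Set Pointwise Filter

/-- The asymptotic cone (limit cone) of a subset `S` of a normed real vector space:
all limits `lim εₙ xₙ` with `xₙ ∈ S`, `εₙ > 0`, `εₙ → 0`. -/
def asymptoticCone' {V : Type*} [NormedAddCommGroup V] [NormedSpace ℝ V] (S : Set V) :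
    Set V :=
  {v : V | ∃ (x : ℕ → V) (ε : ℕ → ℝ), (∀ n, x n ∈ S) ∧ (∀ n, 0 < ε n) ∧
    Tendsto ε atTop (nhds 0) ∧ Tendsto (fun n => ε n • x n) atTop (nhds v)}

/-- If the asymptotic cones of `S` and `T` intersect only at `0`, then `S ⋔ T`: the set
`S ∩ (C + T + C)` is bounded for every compact subset `C` of `V`. -/
theorem asymptoticCone_inter_trivial_implies_pitchfork {V : Type*} [NormedAddCommGroup V]
    [NormedSpace ℝ V] [FiniteDimensional ℝ V] (S T : Set V)
    (h : asymptoticCone' S ∩ asymptoticCone' T ⊆ {0}) :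
    ∀ C : Set V, IsCompact C → Bornology.IsBounded (S ∩ (C + T + C)) := by
  intro C hC
  by_contra hb
  have hnb : ∀ n : ℕ, ∃ x, x ∈ S ∩ (C + T + C) ∧ (n : ℝ) < ‖x‖ := by
    intro n
    by_contra hcon
    push_neg at hcon
    exact hb (isBounded_iff_forall_norm_le.mpr ⟨n, fun x hx => hcon x hx⟩)
  choose u hu hnorm using hnb
  have hdec : ∀ n, ∃ c ∈ C, ∃ t ∈ T, ∃ c' ∈ C, u n = c + t + c' := by
    intro n
    obtain ⟨hS, hCTC⟩ := hu n
    obtain ⟨a, ha, c', hc', hadd⟩ := hCTC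
    obtain ⟨c, hc, t, ht, rfl⟩ := ha
    exact ⟨c, hc, t, ht, c', hc', hadd.symm⟩
  choose c hc t ht c' hc' hsum using hdec
  have hpos : ∀ n, 0 < ‖u n‖ := fun n =>
    lt_of_le_of_lt (Nat.cast_nonneg n) (hnorm n)
  set ε : ℕ → ℝ := fun n => ‖u n‖⁻¹ with hε_def
  have hεpos : ∀ n, 0 < ε n := fun n => inv_pos.mpr (hpos n)
  have hutop : Tendsto (fun n => ‖u n‖) atTop atTop :=
    tendsto_atTop_mono (fun n => (hnorm n).le) tendsto_natCast_atTop_atTop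
  have hε0 : Tendsto ε atTop (nhds 0) := hutop.inv_tendsto_atTop
  have hsph : ∀ n, ε n • u n ∈ Metric.sphere (0 : V) 1 := by
    intro n
    simp only [mem_sphere_zero_iff_norm, norm_smul, Real.norm_eq_abs,
      abs_of_pos (hεpos n)]
    exact inv_mul_cancel₀ (hpos n).ne'
  obtain ⟨v, hv, φ, hφ, hconv⟩ :=
    (isCompact_sphere (0 : V) 1).tendsto_subseq hsph
  have hφtop : Tendsto φ atTop atTop := hφ.tendsto_atTop
  have hε0' : Tendsto (ε ∘ φ) atTop (nhds 0) := hε0.comp hφtop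
  have hvS : v ∈ asymptoticCone' S :=
    ⟨u ∘ φ, ε ∘ φ, fun n => (hu (φ n)).1, fun n => hεpos (φ n), hε0', hconv⟩
  -- bound the compact part
  obtain ⟨M, hM⟩ := isBounded_iff_forall_norm_le.mp hC.isBounded
  have hcc0 : Tendsto (fun n => ε (φ n) • (c (φ n) + c' (φ n))) atTop (nhds 0) := by
    have hbound : ∀ n, ‖ε (φ n) • (c (φ n) + c' (φ n))‖ ≤ ε (φ n) * (M + M) := by
      intro n
      rw [norm_smul, Real.norm_eq_abs, abs_of_pos (hεpos (φ n))]
      exact mul_le_mul_of_nonneg_left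
        ((norm_add_le _ _).trans (add_le_add (hM _ (hc (φ n))) (hM _ (hc' (φ n)))))
        (hεpos (φ n)).le
    exact squeeze_zero_norm hbound (by simpa using hε0'.mul_const (M + M))
  have hconvT : Tendsto (fun n => ε (φ n) • t (φ n)) atTop (nhds v) := by
    have : (fun n => ε (φ n) • t (φ n)) =
        fun n => ε (φ n) • u (φ n) - ε (φ n) • (c (φ n) + c' (φ n)) := by
      funext n
      rw [← smul_sub]
      congr 1
      rw [hsum (φ n)]
      abel
    rw [this]
    simpa using hconv.sub hcc0
  have hvT : v ∈ asymptoticCone' T :=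
    ⟨t ∘ φ, ε ∘ φ, fun n => ht (φ n), fun n => hεpos (φ n), hε0', hconvT⟩
  have hv0 : v = 0 := h ⟨hvS, hvT⟩
  rw [mem_sphere_zero_iff_norm, hv0, norm_zero] at hv
  exact one_ne_zero hv.symm
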